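/- Let q > 1 be real, n ∈ ℕ, and c > 0 real. Then (q^{4n+2};q^{−4})_∞ · (−q^{4n−4} c^{−1};q^{−4})_∞ · (−q^{−4n} c;q^{−4})_∞ = (1 − q²)(1 − q^{−2}) · (−c)^{−n} q^{4n²+2n} (q^{−6};q^{−4})_n · (q^{−6};q^{−4})_∞ · (−c;q^{−4})_∞ · (−c^{−1} q^{−4};q^{−4})_∞. (This evaluates, up to the fixed constant (1 − q²)(1 − q^{−2}), the coefficient C_o of the odd-series expansion at the Fock points ε = −q^{−4n−2}, giving C_o proportional to (−c)^{−n} q^{4n²+2n} (q^{−6};q^{−4})_n.) -/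

import Mathlib

open scoped BigOperators

/-- The q-shifted factorial `(a;p)_n = ∏_{i=0}^{n-1} (1 - a p^i)`. -/
noncomputable def qPoch (a p : ℂ) (n : ℕ) : ℂ :=
  ∏ i ∈ Finset.range n, (1 - a * p ^ i)

/-- The infinite q-shifted factorial `(a;p)_∞ = ∏_{i=0}^∞ (1 - a p^i)`. -/
noncomputable def qPochInf (a p : ℂ) : ℂ :=
  ∏' i : ℕ, (1 - a * p ^ i)

lemma qPoch_succ' (a p : ℂ) (n : ℕ) :
    qPoch a p (n+1) = qPoch a p n * (1 - a * p ^ n) := Finset.prod_range_succ _ _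

lemma multipliable_aux' {a p : ℂ} (hp : ‖p‖ < 1) (h : ∀ i : ℕ, 1 - a * p ^ i ≠ 0) :
    Multipliable (fun i : ℕ => 1 - a * p ^ i) := by
  apply Complex.multipliable_of_summable_log
  have hs : Summable (fun i : ℕ => (3/2 : ℝ) * (‖a‖ * ‖p‖ ^ i)) :=
    ((summable_geometric_of_lt_one (norm_nonneg p) hp).mul_left _).mul_left _
  apply Summable.of_norm_bounded_eventually_nat hs
  have ht : Filter.Tendsto (fun i : ℕ => ‖a‖ * ‖p‖ ^ i) Filter.atTop (nhds 0) := by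
    simpa using (tendsto_pow_atTop_nhds_zero_of_lt_one (norm_nonneg p) hp).const_mul ‖a‖
  filter_upwards [ht.eventually_le_const (by norm_num : (0:ℝ) < 1/2)] with i hi
  have hz : ‖-(a * p ^ i)‖ ≤ 1/2 := by
    rwa [norm_neg, norm_mul, norm_pow]
  have := Complex.norm_log_one_add_half_le_self hz
  rw [show (1 : ℂ) + -(a * p ^ i) = 1 - a * p ^ i by ring] at this
  simpa [norm_mul, norm_pow] using this

lemma qPochInf_shift' {a p : ℂ} (hp : ‖p‖ < 1) (k : ℕ)
    (h : ∀ i : ℕ, 1 - (a * p ^ k) * p ^ i ≠ 0) :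
    qPochInf a p = qPoch a p k * qPochInf (a * p ^ k) p := by
  have hfun : (fun i : ℕ => 1 - a * p ^ (i + k)) = (fun i : ℕ => 1 - (a * p ^ k) * p ^ i) := by
    funext i; rw [pow_add]; ring
  have hm : Multipliable (fun i : ℕ => 1 - a * p ^ (i + k)) := by
    rw [hfun]; exact multipliable_aux' hp h
  have key := Multipliable.prod_mul_tprod_nat_mul' (f := fun i : ℕ => 1 - a * p ^ i) (k := k) hm
  rw [qPochInf, ← key, qPoch, qPochInf, hfun]

section Aux

variable {q : ℝ} (hq : 1 < q)

lemma hpp' (i : ℕ) : ((q:ℂ)^(-4:ℤ))^i = (q:ℂ)^(-4*(i:ℤ)) := by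
  rw [← zpow_natCast ((q:ℂ)^(-4:ℤ)), ← zpow_mul]

include hq

lemma hQne' : (q : ℂ) ≠ 0 := by
  simp only [ne_eq, Complex.ofReal_eq_zero]; intro h; rw [h] at hq; linarith

lemma hQpow_ne_one' {m : ℤ} (hm : m ≠ 0) : (q : ℂ)^m ≠ 1 := by
  intro h
  have h2 : ‖(q:ℂ)^m‖ = 1 := by rw [h]; simp
  rw [norm_zpow, Complex.norm_real, Real.norm_eq_abs, abs_of_pos (by linarith)] at h2
  have hsm := zpow_right_strictMono₀ hq
  rcases lt_trichotomy m 0 with hlt | he | hgt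
  · have := hsm hlt; simp at this; linarith
  · exact hm he
  · have := hsm hgt; simp at this; linarith

lemma F1' (n : ℕ) :
    ∏ i ∈ Finset.range (n+1), (1 - (q:ℂ)^(4*(n:ℤ)+2) * ((q:ℂ)^(-4:ℤ))^i)
      = (1 - (q:ℂ)^(2:ℤ)) * (-1)^n * (q:ℂ)^(2*(n:ℤ)^2+4*(n:ℤ)) *
        qPoch ((q:ℂ)^(-6:ℤ)) ((q:ℂ)^(-4:ℤ)) n := by
  have hQ : (q : ℂ) ≠ 0 := hQne' hq
  induction n with
  | zero => simp [qPoch]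
  | succ n ih =>
    rw [Finset.prod_range_succ']
    push_cast
    have hterm : ∀ i : ℕ,
        1 - (q:ℂ)^(4*((n:ℤ)+1)+2) * ((q:ℂ)^(-4:ℤ))^(i+1)
          = 1 - (q:ℂ)^(4*(n:ℤ)+2) * ((q:ℂ)^(-4:ℤ))^i := by
      intro i
      have key : (q:ℂ)^(4*((n:ℤ)+1)+2) * (q:ℂ)^(-4*((i:ℤ)+1))
          = (q:ℂ)^(4*(n:ℤ)+2) * (q:ℂ)^(-4*(i:ℤ)) := by
        rw [← zpow_add₀ hQ, ← zpow_add₀ hQ]; congr 1; all_goals ring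
      rw [hpp', hpp']
      push_cast
      linear_combination -key
    rw [Finset.prod_congr rfl (fun i _ => hterm i), ih]
    have h1 : (1 : ℂ) - (q:ℂ)^(4*((n:ℤ)+1)+2)
        = -(q:ℂ)^(4*(n:ℤ)+6) * (1 - (q:ℂ)^(-6:ℤ) * ((q:ℂ)^(-4:ℤ))^n) := by
      have k1 : (q:ℂ)^(4*(n:ℤ)+6) * ((q:ℂ)^(-6:ℤ) * (q:ℂ)^(-4*(n:ℤ))) = 1 := by
        rw [← zpow_add₀ hQ, ← zpow_add₀ hQ,
          show (4*(n:ℤ)+6) + (-6 + -4*(n:ℤ)) = 0 by ring, zpow_zero]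
      have k2 : (q:ℂ)^(4*((n:ℤ)+1)+2) = (q:ℂ)^(4*(n:ℤ)+6) := by congr 1; all_goals ring
      rw [hpp', k2]
      linear_combination -k1
    have h2 : (q:ℂ)^(2*((n:ℤ)+1)^2+4*((n:ℤ)+1))
        = (q:ℂ)^(2*(n:ℤ)^2+4*(n:ℤ)) * (q:ℂ)^(4*(n:ℤ)+6) := by
      rw [← zpow_add₀ hQ]; congr 1; all_goals ring
    rw [qPoch_succ', pow_succ, pow_zero, mul_one, h1, h2]
    ring

lemma F2' {c : ℝ} (hc : c ≠ 0) (n : ℕ) :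
    ∏ i ∈ Finset.range n, (1 - (-(q:ℂ)^(4*(n:ℤ)-4) * (c:ℂ)⁻¹) * ((q:ℂ)^(-4:ℤ))^i)
      = (c:ℂ)^(-(n:ℤ)) * (q:ℂ)^(2*(n:ℤ)^2-2*(n:ℤ)) *
        qPoch (-(c:ℂ)) ((q:ℂ)^(-4:ℤ)) n := by
  have hQ : (q : ℂ) ≠ 0 := hQne' hq
  have hcC : (c:ℂ) ≠ 0 := by simpa using hc
  induction n with
  | zero => simp [qPoch]
  | succ n ih =>
    rw [Finset.prod_range_succ']
    push_cast
    have hterm : ∀ i : ℕ,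
        1 - (-(q:ℂ)^(4*((n:ℤ)+1)-4) * (c:ℂ)⁻¹) * ((q:ℂ)^(-4:ℤ))^(i+1)
          = 1 - (-(q:ℂ)^(4*(n:ℤ)-4) * (c:ℂ)⁻¹) * ((q:ℂ)^(-4:ℤ))^i := by
      intro i
      have key : (q:ℂ)^(4*((n:ℤ)+1)-4) * (q:ℂ)^(-4*((i:ℤ)+1))
          = (q:ℂ)^(4*(n:ℤ)-4) * (q:ℂ)^(-4*(i:ℤ)) := by
        rw [← zpow_add₀ hQ, ← zpow_add₀ hQ]; congr 1; all_goals ring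
      rw [hpp', hpp']
      push_cast
      linear_combination (c:ℂ)⁻¹ * key
    rw [Finset.prod_congr rfl (fun i _ => hterm i), ih]
    have h1 : (1 : ℂ) - (-(q:ℂ)^(4*((n:ℤ)+1)-4) * (c:ℂ)⁻¹)
        = (c:ℂ)⁻¹ * (q:ℂ)^(4*(n:ℤ)) * (1 - (-(c:ℂ)) * ((q:ℂ)^(-4:ℤ))^n) := by
      have k1 : (q:ℂ)^(4*(n:ℤ)) * (q:ℂ)^(-4*(n:ℤ)) = 1 := by
        rw [← zpow_add₀ hQ, show (4*(n:ℤ)) + (-4*(n:ℤ)) = 0 by ring, zpow_zero]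
      have k2 : (q:ℂ)^(4*((n:ℤ)+1)-4) = (q:ℂ)^(4*(n:ℤ)) := by congr 1; all_goals ring
      have k : (c:ℂ)⁻¹ * (q:ℂ)^(4*(n:ℤ)) * (c:ℂ) * (q:ℂ)^(-4*(n:ℤ)) = 1 := by
        rw [show (c:ℂ)⁻¹ * (q:ℂ)^(4*(n:ℤ)) * (c:ℂ) * (q:ℂ)^(-4*(n:ℤ))
            = ((c:ℂ)⁻¹ * (c:ℂ)) * ((q:ℂ)^(4*(n:ℤ)) * (q:ℂ)^(-4*(n:ℤ))) by ring,
          inv_mul_cancel₀ hcC, k1, mul_one]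
      rw [hpp', k2]
      linear_combination -k
    have h2 : (c:ℂ)^(-((n:ℤ)+1)) = (c:ℂ)^(-(n:ℤ)) * (c:ℂ)⁻¹ := by
      rw [← zpow_neg_one, ← zpow_add₀ hcC]; congr 1; all_goals ring
    have h3 : (q:ℂ)^(2*((n:ℤ)+1)^2-2*((n:ℤ)+1))
        = (q:ℂ)^(2*(n:ℤ)^2-2*(n:ℤ)) * (q:ℂ)^(4*(n:ℤ)) := by
      rw [← zpow_add₀ hQ]; congr 1; all_goals ring
    rw [qPoch_succ', pow_zero, mul_one, h1, h2, h3]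
    ring

end Aux

/-- Evaluation (up to the fixed constant `(1-q²)(1-q⁻²)`) of the coefficient `C_o`
at the Fock points `ε = -q^{-4n-2}`:
`(q^{4n+2};q⁻⁴)_∞ (-q^{4n-4}c⁻¹;q⁻⁴)_∞ (-q^{-4n}c;q⁻⁴)_∞
  = (1-q²)(1-q⁻²) (-c)^{-n} q^{4n²+2n} (q⁻⁶;q⁻⁴)_n (q⁻⁶;q⁻⁴)_∞ (-c;q⁻⁴)_∞ (-c⁻¹q⁻⁴;q⁻⁴)_∞`. -/
theorem Co_fock_evaluation (q : ℝ) (hq : 1 < q) (n : ℕ) (c : ℝ) (hc : 0 < c) :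
    qPochInf ((q : ℂ) ^ (4 * (n : ℤ) + 2)) ((q : ℂ) ^ (-4 : ℤ)) *
      qPochInf (-(q : ℂ) ^ (4 * (n : ℤ) - 4) * (c : ℂ)⁻¹) ((q : ℂ) ^ (-4 : ℤ)) *
      qPochInf (-(q : ℂ) ^ (-(4 * (n : ℤ))) * (c : ℂ)) ((q : ℂ) ^ (-4 : ℤ)) =
    (1 - (q : ℂ) ^ 2) * (1 - (q : ℂ) ^ (-2 : ℤ)) *
      ((-(c : ℂ)) ^ (-(n : ℤ)) * (q : ℂ) ^ (4 * (n : ℤ) ^ 2 + 2 * (n : ℤ)) *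
        qPoch ((q : ℂ) ^ (-6 : ℤ)) ((q : ℂ) ^ (-4 : ℤ)) n *
        qPochInf ((q : ℂ) ^ (-6 : ℤ)) ((q : ℂ) ^ (-4 : ℤ)) *
        qPochInf (-(c : ℂ)) ((q : ℂ) ^ (-4 : ℤ)) *
        qPochInf (-(c : ℂ)⁻¹ * (q : ℂ) ^ (-4 : ℤ)) ((q : ℂ) ^ (-4 : ℤ))) := by
  have hq0 : (0:ℝ) < q := by linarith
  have hQ : (q : ℂ) ≠ 0 := hQne' hq
  have hcC : (c : ℂ) ≠ 0 := by
    simp only [ne_eq, Complex.ofReal_eq_zero]; linarith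
  -- |p| < 1
  have hp : ‖(q:ℂ)^(-4:ℤ)‖ < 1 := by
    rw [norm_zpow, Complex.norm_real, Real.norm_eq_abs, abs_of_pos hq0]
    have := zpow_right_strictMono₀ hq (show (-4:ℤ) < 0 by norm_num)
    simpa using this
  -- argument rewrites
  have e1 : (q:ℂ)^(4*(n:ℤ)+2) * ((q:ℂ)^(-4:ℤ))^(n+1) = (q:ℂ)^(-2:ℤ) := by
    rw [hpp', ← zpow_add₀ hQ]; congr 1; all_goals (push_cast; ring)
  have e1b : (q:ℂ)^(-2:ℤ) * ((q:ℂ)^(-4:ℤ))^1 = (q:ℂ)^(-6:ℤ) := by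
    rw [hpp', ← zpow_add₀ hQ]; congr 1; all_goals ring
  have e2 : (-(q:ℂ)^(4*(n:ℤ)-4) * (c:ℂ)⁻¹) * ((q:ℂ)^(-4:ℤ))^n
      = -(c:ℂ)⁻¹ * (q:ℂ)^(-4:ℤ) := by
    rw [hpp']
    have : (q:ℂ)^(4*(n:ℤ)-4) * (q:ℂ)^(-4*(n:ℤ)) = (q:ℂ)^(-4:ℤ) := by
      rw [← zpow_add₀ hQ]; congr 1; all_goals ring
    linear_combination -(c:ℂ)⁻¹ * this
  have e3 : (-(c:ℂ)) * ((q:ℂ)^(-4:ℤ))^n = -(q:ℂ)^(-(4*(n:ℤ))) * (c:ℂ) := by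
    rw [hpp']
    have : (q:ℂ)^(-4*(n:ℤ)) = (q:ℂ)^(-(4*(n:ℤ))) := by congr 1; all_goals ring
    rw [this]; ring
  -- nonvanishing of real-positive factors
  have hreal : ∀ (x : ℝ), 0 < x → ∀ (z : ℂ), z = -(x:ℂ) → ∀ i : ℕ,
      1 - z * ((q:ℂ)^(-4:ℤ))^i ≠ 0 := by
    intro x hx z hz i
    rw [hz, hpp']
    have heq : (1:ℂ) - -(x:ℂ) * (q:ℂ)^(-4*(i:ℤ)) = ((1 + x * q^(-4*(i:ℤ)) : ℝ) : ℂ) := by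
      push_cast; ring
    rw [heq, ne_eq, Complex.ofReal_eq_zero]
    have : (0:ℝ) < q^(-4*(i:ℤ)) := zpow_pos hq0 _
    nlinarith
  have hQfac : ∀ (m : ℤ), m < 0 → ∀ i : ℕ, 1 - (q:ℂ)^m * ((q:ℂ)^(-4:ℤ))^i ≠ 0 := by
    intro m hm i
    rw [hpp', ← zpow_add₀ hQ]
    exact sub_ne_zero_of_ne (hQpow_ne_one' hq (by omega)).symm
  -- shift the three infinite products
  have s1 : qPochInf ((q:ℂ)^(4*(n:ℤ)+2)) ((q:ℂ)^(-4:ℤ))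
      = qPoch ((q:ℂ)^(4*(n:ℤ)+2)) ((q:ℂ)^(-4:ℤ)) (n+1) *
        qPochInf ((q:ℂ)^(-2:ℤ)) ((q:ℂ)^(-4:ℤ)) := by
    rw [qPochInf_shift' hp (n+1) (by rw [e1]; exact hQfac (-2) (by norm_num)), e1]
  have s1b : qPochInf ((q:ℂ)^(-2:ℤ)) ((q:ℂ)^(-4:ℤ))
      = (1 - (q:ℂ)^(-2:ℤ)) * qPochInf ((q:ℂ)^(-6:ℤ)) ((q:ℂ)^(-4:ℤ)) := by
    rw [qPochInf_shift' hp 1 (by rw [e1b]; exact hQfac (-6) (by norm_num)), e1b]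
    congr 1
    simp [qPoch]
  have hcinv : (0:ℝ) < c⁻¹ := by positivity
  have s2 : qPochInf (-(q:ℂ)^(4*(n:ℤ)-4) * (c:ℂ)⁻¹) ((q:ℂ)^(-4:ℤ))
      = qPoch (-(q:ℂ)^(4*(n:ℤ)-4) * (c:ℂ)⁻¹) ((q:ℂ)^(-4:ℤ)) n *
        qPochInf (-(c:ℂ)⁻¹ * (q:ℂ)^(-4:ℤ)) ((q:ℂ)^(-4:ℤ)) := by
    rw [qPochInf_shift' hp n (by
      rw [e2]
      exact hreal (c⁻¹ * q^(-4:ℤ)) (by positivity) _ (by push_cast; ring)), e2]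
  have s3 : qPochInf (-(c:ℂ)) ((q:ℂ)^(-4:ℤ))
      = qPoch (-(c:ℂ)) ((q:ℂ)^(-4:ℤ)) n *
        qPochInf (-(q:ℂ)^(-(4*(n:ℤ))) * (c:ℂ)) ((q:ℂ)^(-4:ℤ)) := by
    rw [qPochInf_shift' hp n (by
      rw [e3]
      exact hreal (q^(-(4*(n:ℤ))) * c) (by positivity) _ (by push_cast; ring)), e3]
  rw [s1, s1b, s2, s3]
  -- finite product evaluations
  have f1 : qPoch ((q:ℂ)^(4*(n:ℤ)+2)) ((q:ℂ)^(-4:ℤ)) (n+1)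
      = (1 - (q:ℂ)^(2:ℤ)) * (-1)^n * (q:ℂ)^(2*(n:ℤ)^2+4*(n:ℤ)) *
        qPoch ((q:ℂ)^(-6:ℤ)) ((q:ℂ)^(-4:ℤ)) n := by
    rw [qPoch]; exact F1' hq n
  have f2 : qPoch (-(q:ℂ)^(4*(n:ℤ)-4) * (c:ℂ)⁻¹) ((q:ℂ)^(-4:ℤ)) n
      = (c:ℂ)^(-(n:ℤ)) * (q:ℂ)^(2*(n:ℤ)^2-2*(n:ℤ)) *
        qPoch (-(c:ℂ)) ((q:ℂ)^(-4:ℤ)) n := by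
    rw [qPoch]; exact F2' hq (ne_of_gt hc) n
  rw [f1, f2]
  -- scalar bookkeeping
  have g1 : ((q:ℂ))^(2:ℤ) = ((q:ℂ))^(2:ℕ) := by
    rw [show ((2:ℤ)) = ((2:ℕ):ℤ) by norm_num, zpow_natCast]
  have g2 : (-(c:ℂ))^(-(n:ℤ)) = (-1:ℂ)^n * (c:ℂ)^(-(n:ℤ)) := by
    rw [show (-(c:ℂ)) = (-1) * (c:ℂ) by ring, mul_zpow]
    congr 1
    rw [zpow_neg, zpow_natCast, ← inv_pow, inv_neg, inv_one]
  have g3 : (q:ℂ)^(4*(n:ℤ)^2+2*(n:ℤ))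
      = (q:ℂ)^(2*(n:ℤ)^2+4*(n:ℤ)) * (q:ℂ)^(2*(n:ℤ)^2-2*(n:ℤ)) := by
    rw [← zpow_add₀ hQ]; congr 1; all_goals ring
  rw [← g1, g2, g3]
  ring
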